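/- The Hermite form is unique: if A ∈ S^{n×n} has full row rank and U·A = H, V·A = G with U, V unimodular and H, G in Hermite form, then H = G and U = V. -/

import Mathlib

/-- Abstract presentation of a skew (Ore/differential) polynomial ring `S = K[D; δ]`:
`S` is a ring containing `K` via `ι`, with a distinguished element `D` satisfying the
commutation rule `D * a = a * D + δ a`, and every element of `S` is (uniquely) a finite
sum `∑ aₙ Dⁿ`, with coefficients `coeff` supported on `supp`. -/
structure DiffPolyRing (K : Type) [CommRing K] (S : Type) [Ring S] (δ : K → K) where
  ι : K →+* S
  D : S
  comm_rule : ∀ a : K, D * ι a = ι a * D + ι (δ a)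
  coeff : S → ℕ → K
  supp : S → Finset ℕ
  mem_supp : ∀ f n, n ∈ supp f ↔ coeff f n ≠ 0
  coeff_add : ∀ f g n, coeff (f + g) n = coeff f n + coeff g n
  coeff_ext : ∀ f g : S, (∀ n, coeff f n = coeff g n) → f = g
  coeff_monomial : ∀ (a : K) (i n : ℕ), coeff (ι a * D ^ i) n = if n = i then a else 0
  repr_sum : ∀ f : S, f = ∑ n ∈ supp f, ι (coeff f n) * D ^ n

namespace DiffPolyRing

variable {K S : Type} [CommRing K] [Ring S] {δ : K → K}

/-- Degree in the variable `D`, with `degD 0 = ⊥` (i.e. `-∞`). -/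
noncomputable def degD (R : DiffPolyRing K S δ) (f : S) : WithBot ℕ := (R.supp f).max

/-- Degree in `D` as a natural number (`0` for the zero polynomial). -/
noncomputable def natDegD (R : DiffPolyRing K S δ) (f : S) : ℕ := (R.degD f).unbotD 0

/-- `f` is monic: its leading coefficient (in `D`) is `1`. -/
noncomputable def Monic (R : DiffPolyRing K S δ) (f : S) : Prop :=
  R.coeff f (R.natDegD f) = 1

/-- `H` is in Hermite form: upper triangular, monic diagonal entries, and each
off-diagonal entry has `D`-degree strictly less than the diagonal entry below it. -/
noncomputable def HermiteForm (R : DiffPolyRing K S δ) {n : ℕ}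
    (H : Matrix (Fin n) (Fin n) S) : Prop :=
  (∀ i j, j < i → H i j = 0) ∧ (∀ i, R.Monic (H i i)) ∧
    (∀ i j, i < j → R.degD (H i j) < R.degD (H j j))

/-- The rows of `A` are left `S`-linearly independent. -/
def FullRowRank {n : ℕ} (A : Matrix (Fin n) (Fin n) S) : Prop :=
  ∀ c : Fin n → S, (∀ j, (∑ i, c i * A i j) = 0) → c = 0

end DiffPolyRing



namespace DiffPolyRing

variable {K S : Type} [Field K] [Ring S] {δ : K → K} (R : DiffPolyRing K S δ)

/-- coeff as an additive hom. -/
def coeffHom (n : ℕ) : S →+ K :=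
  AddMonoidHom.mk' (fun f => R.coeff f n) (fun a b => R.coeff_add a b n)

lemma coeff_zero' (n : ℕ) : R.coeff 0 n = 0 := (R.coeffHom n).map_zero

lemma coeff_sub' (f g : S) (n : ℕ) : R.coeff (f - g) n = R.coeff f n - R.coeff g n :=
  (R.coeffHom n).map_sub f g

lemma coeff_sum' {α : Type*} (s : Finset α) (f : α → S) (n : ℕ) :
    R.coeff (∑ i ∈ s, f i) n = ∑ i ∈ s, R.coeff (f i) n :=
  map_sum (R.coeffHom n) f s

lemma ne_zero_of_coeff {f : S} {n : ℕ} (h : R.coeff f n ≠ 0) : f ≠ 0 := by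
  intro hf; exact h (hf ▸ R.coeff_zero' n)

lemma coeff_one' (n : ℕ) : R.coeff 1 n = if n = 0 then 1 else 0 := by
  have := R.coeff_monomial 1 0 n
  simpa using this

include R in
lemma one_ne_zero'' : (1 : S) ≠ 0 :=
  R.ne_zero_of_coeff (n := 0) (by rw [R.coeff_one']; simp)

lemma le_degD_of_coeff_ne {f : S} {m : ℕ} (h : R.coeff f m ≠ 0) :
    (m : WithBot ℕ) ≤ R.degD f :=
  Finset.le_max ((R.mem_supp f m).2 h)

lemma coeff_eq_zero_of_degD_lt {f : S} {m : ℕ} (h : R.degD f < (m : WithBot ℕ)) :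
    R.coeff f m = 0 := by
  by_contra hc
  exact absurd (R.le_degD_of_coeff_ne hc) (not_le.2 h)

lemma degD_eq_natDegD {f : S} (hf : f ≠ 0) : R.degD f = (R.natDegD f : WithBot ℕ) := by
  have hne : R.degD f ≠ ⊥ := by
    intro hb
    apply hf
    apply R.coeff_ext f 0
    intro m
    rw [R.coeff_zero']
    by_contra hc
    have := Finset.le_max ((R.mem_supp f m).2 hc)
    rw [show R.degD f = (R.supp f).max from rfl] at hb
    rw [hb] at this
    exact absurd this (by simp)
  unfold natDegD
  cases h : R.degD f with
  | bot => exact absurd h hne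
  | coe d => rfl

lemma lc_ne_zero {f : S} (hf : f ≠ 0) : R.coeff f (R.natDegD f) ≠ 0 := by
  have h := R.degD_eq_natDegD hf
  have : R.natDegD f ∈ R.supp f := Finset.mem_of_max h
  exact (R.mem_supp f _).1 this

lemma coeff_eq_zero_of_natDegD_lt {f : S} {m : ℕ} (h : R.natDegD f < m) :
    R.coeff f m = 0 := by
  by_cases hf : f = 0
  · subst hf; exact R.coeff_zero' m
  · exact R.coeff_eq_zero_of_degD_lt (by rw [R.degD_eq_natDegD hf]; exact_mod_cast h)

/-- characterize natDegD via coefficients -/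
lemma natDegD_eq_of {f : S} {d : ℕ} (h1 : R.coeff f d ≠ 0)
    (h2 : ∀ m, d < m → R.coeff f m = 0) : R.natDegD f = d := by
  have hf : f ≠ 0 := R.ne_zero_of_coeff h1
  have hle : d ≤ R.natDegD f := by
    have := R.le_degD_of_coeff_ne h1
    rw [R.degD_eq_natDegD hf] at this
    exact_mod_cast this
  have hge : R.natDegD f ≤ d := by
    by_contra hc
    exact R.lc_ne_zero hf (h2 _ (not_le.1 hc))
  omega

lemma monic_ne_zero {f : S} (h : R.Monic f) : f ≠ 0 :=
  R.ne_zero_of_coeff (n := R.natDegD f) (by rw [h]; exact one_ne_zero)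

end DiffPolyRing
namespace DiffPolyRing

variable {K S : Type} [Field K] [Ring S] {δ : K → K} (R : DiffPolyRing K S δ)

lemma coeff_iota_mul (a : K) (f : S) (m : ℕ) :
    R.coeff (R.ι a * f) m = a * R.coeff f m := by
  conv_lhs => rw [R.repr_sum f]
  rw [Finset.mul_sum]
  have : ∀ i ∈ R.supp f, R.ι a * (R.ι (R.coeff f i) * R.D ^ i)
      = R.ι (a * R.coeff f i) * R.D ^ i := by
    intro i _
    rw [← mul_assoc, ← map_mul]
  rw [Finset.sum_congr rfl this, R.coeff_sum']
  have : ∀ i ∈ R.supp f, R.coeff (R.ι (a * R.coeff f i) * R.D ^ i) m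
      = if i = m then a * R.coeff f i else 0 := by
    intro i _
    rw [R.coeff_monomial]
    simp [eq_comm]
  rw [Finset.sum_congr rfl this, Finset.sum_ite_eq' (R.supp f) m (fun i => a * R.coeff f i)]
  by_cases hm : m ∈ R.supp f
  · simp [hm]
  · rw [if_neg hm]
    have : R.coeff f m = 0 := by
      by_contra hc; exact hm ((R.mem_supp f m).2 hc)
    rw [this, mul_zero]

variable (hδ0 : δ 0 = 0)
include R hδ0

lemma coeff_D_mul (f : S) (m : ℕ) :
    R.coeff (R.D * f) m
      = (match m with | 0 => 0 | k + 1 => R.coeff f k) + δ (R.coeff f m) := by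
  conv_lhs => rw [R.repr_sum f]
  rw [Finset.mul_sum]
  have step : ∀ i ∈ R.supp f, R.D * (R.ι (R.coeff f i) * R.D ^ i)
      = R.ι (R.coeff f i) * R.D ^ (i + 1) + R.ι (δ (R.coeff f i)) * R.D ^ i := by
    intro i _
    rw [← mul_assoc, R.comm_rule, add_mul, mul_assoc, ← pow_succ']
  rw [Finset.sum_congr rfl step, R.coeff_sum']
  have step2 : ∀ i ∈ R.supp f,
      R.coeff (R.ι (R.coeff f i) * R.D ^ (i + 1) + R.ι (δ (R.coeff f i)) * R.D ^ i) m
      = (if i + 1 = m then R.coeff f i else 0) + (if i = m then δ (R.coeff f i) else 0) := by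
    intro i _
    rw [R.coeff_add, R.coeff_monomial, R.coeff_monomial]
    simp [eq_comm]
  rw [Finset.sum_congr rfl step2, Finset.sum_add_distrib]
  have h2 : (∑ i ∈ R.supp f, if i = m then δ (R.coeff f i) else 0) = δ (R.coeff f m) := by
    rw [Finset.sum_ite_eq' (R.supp f) m (fun i => δ (R.coeff f i))]
    by_cases hm : m ∈ R.supp f
    · simp [hm]
    · rw [if_neg hm]
      have : R.coeff f m = 0 := by
        by_contra hc; exact hm ((R.mem_supp f m).2 hc)
      rw [this, hδ0]
  rw [h2]
  congr 1
  match m with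
  | 0 => simp
  | k + 1 =>
    have : ∀ i ∈ R.supp f, (if i + 1 = k + 1 then R.coeff f i else 0)
        = (if i = k then R.coeff f i else 0) := by
      intro i _; simp
    rw [Finset.sum_congr rfl this, Finset.sum_ite_eq' (R.supp f) k (fun i => R.coeff f i)]
    by_cases hk : k ∈ R.supp f
    · simp [hk]
    · rw [if_neg hk]
      by_contra hc
      exact hk ((R.mem_supp f k).2 (fun h => hc h.symm))

lemma coeff_D_mul_succ (f : S) (k : ℕ) :
    R.coeff (R.D * f) (k + 1) = R.coeff f k + δ (R.coeff f (k + 1)) :=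
  R.coeff_D_mul hδ0 f (k + 1)

/-- If coefficients of `f` vanish above `d`, then `D^i * f` has coefficients vanishing
above `d + i` and its coefficient at `d + i` equals that of `f` at `d`. -/
lemma coeff_D_pow_mul (f : S) (d : ℕ) (hd : ∀ m, d < m → R.coeff f m = 0) (i : ℕ) :
    (∀ m, d + i < m → R.coeff (R.D ^ i * f) m = 0) ∧
      R.coeff (R.D ^ i * f) (d + i) = R.coeff f d := by
  induction i with
  | zero => simpa using hd
  | succ i ih =>
    have hrw : R.D ^ (i + 1) * f = R.D * (R.D ^ i * f) := by
      rw [pow_succ', mul_assoc]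
    constructor
    · intro m hm
      match m, hm with
      | k + 1, hm =>
        rw [hrw, R.coeff_D_mul_succ hδ0]
        have h1 : R.coeff (R.D ^ i * f) k = 0 := ih.1 k (by omega)
        have h2 : R.coeff (R.D ^ i * f) (k + 1) = 0 := ih.1 (k + 1) (by omega)
        rw [h1, h2, hδ0, add_zero]
    · rw [hrw, show d + (i + 1) = (d + i) + 1 by omega, R.coeff_D_mul_succ hδ0]
      rw [ih.2, ih.1 (d + i + 1) (by omega), hδ0, add_zero]

/-- Leading coefficient and degree bound of a product. -/
lemma coeff_mul_top (f g : S) (hf : f ≠ 0) :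
    (∀ m, R.natDegD f + R.natDegD g < m → R.coeff (f * g) m = 0) ∧
      R.coeff (f * g) (R.natDegD f + R.natDegD g)
        = R.coeff f (R.natDegD f) * R.coeff g (R.natDegD g) := by
  set df := R.natDegD f with hdf
  set dg := R.natDegD g with hdg
  have hg' : ∀ m, dg < m → R.coeff g m = 0 := fun m hm => R.coeff_eq_zero_of_natDegD_lt hm
  have hexp : f * g = ∑ i ∈ R.supp f, R.ι (R.coeff f i) * (R.D ^ i * g) := by
    conv_lhs => rw [R.repr_sum f]
    rw [Finset.sum_mul]
    exact Finset.sum_congr rfl (fun i _ => by rw [mul_assoc])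
  have hsupp_le : ∀ i ∈ R.supp f, i ≤ df := by
    intro i hi
    have h1 : (i : WithBot ℕ) ≤ R.degD f := Finset.le_max hi
    rw [R.degD_eq_natDegD hf] at h1
    exact_mod_cast h1
  have hcoe : ∀ m, R.coeff (f * g) m
      = ∑ i ∈ R.supp f, R.coeff f i * R.coeff (R.D ^ i * g) m := by
    intro m
    rw [hexp, R.coeff_sum']
    exact Finset.sum_congr rfl (fun i _ => R.coeff_iota_mul _ _ _)
  constructor
  · intro m hm
    rw [hcoe]
    apply Finset.sum_eq_zero
    intro i hi
    have : dg + i < m := by have := hsupp_le i hi; omega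
    rw [(R.coeff_D_pow_mul hδ0 g dg hg' i).1 m this, mul_zero]
  · rw [hcoe]
    have : ∀ i ∈ R.supp f, R.coeff f i * R.coeff (R.D ^ i * g) (df + dg)
        = if i = df then R.coeff f df * R.coeff g dg else 0 := by
      intro i hi
      rcases eq_or_lt_of_le (hsupp_le i hi) with h | h
      · subst h
        rw [if_pos rfl, show df + dg = dg + df by omega,
          (R.coeff_D_pow_mul hδ0 g dg hg' df).2]
      · rw [if_neg (by omega), (R.coeff_D_pow_mul hδ0 g dg hg' i).1 (df + dg) (by omega),
          mul_zero]
    rw [Finset.sum_congr rfl this,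
      Finset.sum_ite_eq' (R.supp f) df (fun _ => R.coeff f df * R.coeff g dg),
      if_pos ((R.mem_supp f df).2 (R.lc_ne_zero hf))]

lemma mul_ne_zero'' {f g : S} (hf : f ≠ 0) (hg : g ≠ 0) : f * g ≠ 0 := by
  have h : R.coeff (f * g) (R.natDegD f + R.natDegD g) ≠ 0 := by
    rw [(R.coeff_mul_top hδ0 f g hf).2]
    exact mul_ne_zero (R.lc_ne_zero hf) (R.lc_ne_zero hg)
  exact R.ne_zero_of_coeff h

lemma natDegD_mul {f g : S} (hf : f ≠ 0) (hg : g ≠ 0) :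
    R.natDegD (f * g) = R.natDegD f + R.natDegD g :=
  R.natDegD_eq_of
    (by rw [(R.coeff_mul_top hδ0 f g hf).2]
        exact mul_ne_zero (R.lc_ne_zero hf) (R.lc_ne_zero hg))
    (R.coeff_mul_top hδ0 f g hf).1

lemma lc_mul {f g : S} (hf : f ≠ 0) (hg : g ≠ 0) :
    R.coeff (f * g) (R.natDegD (f * g))
      = R.coeff f (R.natDegD f) * R.coeff g (R.natDegD g) := by
  rw [R.natDegD_mul hδ0 hf hg, (R.coeff_mul_top hδ0 f g hf).2]

omit hδ0 in
include R in
lemma natDegD_one : R.natDegD (1 : S) = 0 :=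
  R.natDegD_eq_of (by rw [R.coeff_one']; simp)
    (fun m hm => by rw [R.coeff_one']; simp; omega)

/-- a (left or right) invertible element of `S` is a nonzero scalar. -/
lemma eq_iota_of_mul_eq_one {u v : S} (huv : u * v = 1) :
    ∃ a : K, a ≠ 0 ∧ u = R.ι a := by
  have hu : u ≠ 0 := by
    intro h; rw [h, zero_mul] at huv; exact R.one_ne_zero'' huv.symm
  have hv : v ≠ 0 := by
    intro h; rw [h, mul_zero] at huv; exact R.one_ne_zero'' huv.symm
  have hdeg : R.natDegD u + R.natDegD v = 0 := by
    rw [← R.natDegD_mul hδ0 hu hv, huv, R.natDegD_one]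
  have hdu : R.natDegD u = 0 := by omega
  refine ⟨R.coeff u 0, ?_, ?_⟩
  · have := R.lc_ne_zero hu; rwa [hdu] at this
  · apply R.coeff_ext
    intro m
    have : R.ι (R.coeff u 0) = R.ι (R.coeff u 0) * R.D ^ 0 := by simp
    rw [this, R.coeff_monomial]
    match m with
    | 0 => simp
    | k + 1 =>
      rw [if_neg (by omega)]
      exact R.coeff_eq_zero_of_natDegD_lt (by omega)

end DiffPolyRing

/-- uniqueness of the Hermite form and of the unimodular multiplier. -/
theorem hermite_form_unique {F : Type} [Field F] [CharZero F] {S : Type} [Ring S]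
    (δ : RatFunc F → RatFunc F)
    (hδadd : ∀ a b : RatFunc F, δ (a + b) = δ a + δ b)
    (hδmul : ∀ a b : RatFunc F, δ (a * b) = a * δ b + δ a * b)
    (R : DiffPolyRing (RatFunc F) S δ) {n : ℕ}
    (A U V H G : Matrix (Fin n) (Fin n) S)
    (hA : DiffPolyRing.FullRowRank A)
    (hU : IsUnit U) (hV : IsUnit V)
    (hUA : U * A = H) (hVA : V * A = G)
    (hH : R.HermiteForm H) (hG : R.HermiteForm G) :
    H = G ∧ U = V := by
  have hδ0 : δ 0 = 0 := by
    have h := hδadd 0 0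
    rw [add_zero] at h
    exact (left_eq_add.mp h)
  have hcancel : ∀ {f g : S}, f * g = 0 → g ≠ 0 → f = 0 := by
    intro f g hfg hg
    by_contra hf
    exact R.mul_ne_zero'' hδ0 hf hg hfg
  obtain ⟨hHtri, hHmon, hHdeg⟩ := hH
  obtain ⟨hGtri, hGmon, hGdeg⟩ := hG
  have hGdne : ∀ i, G i i ≠ 0 := fun i => R.monic_ne_zero (hGmon i)
  have hHdne : ∀ i, H i i ≠ 0 := fun i => R.monic_ne_zero (hHmon i)
  set Vi : Matrix (Fin n) (Fin n) S := Units.val (hV.unit⁻¹) with hVi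
  set Ui : Matrix (Fin n) (Fin n) S := Units.val (hU.unit⁻¹) with hUi
  have hViV : Vi * V = 1 := hV.val_inv_mul
  have hUiU : Ui * U = 1 := hU.val_inv_mul
  have hUUi : U * Ui = 1 := hU.mul_val_inv
  set W : Matrix (Fin n) (Fin n) S := U * Vi with hW
  set W' : Matrix (Fin n) (Fin n) S := V * Ui with hW'
  have hWG : W * G = H := by
    rw [hW, ← hVA, ← hUA, mul_assoc, ← mul_assoc Vi V A, hViV, one_mul]
  have hW'H : W' * H = G := by
    rw [hW', ← hVA, ← hUA, mul_assoc, ← mul_assoc Ui U A, hUiU, one_mul]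
  have hWW' : W * W' = 1 := by
    rw [hW, hW', mul_assoc, ← mul_assoc Vi V Ui, hViV, one_mul, hUUi]
  -- generic triangularity
  have tri : ∀ (X M N : Matrix (Fin n) (Fin n) S),
      X * M = N → (∀ i j, j < i → M i j = 0) → (∀ i, M i i ≠ 0) →
      (∀ i j, j < i → N i j = 0) → ∀ i k, k < i → X i k = 0 := by
    intro X M N hXM hMtri hMdiag hNtri i
    suffices h : ∀ m : ℕ, ∀ k : Fin n, (k : ℕ) = m → k < i → X i k = 0 by
      intro k hk; exact h k k rfl hk
    intro m
    induction m using Nat.strong_induction_on with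
    | _ m ih =>
      intro k hk hki
      have hsum : (∑ x, X i x * M x k) = 0 := by
        have h1 : (X * M) i k = N i k := by rw [hXM]
        rw [Matrix.mul_apply] at h1
        rw [h1]
        exact hNtri i k hki
      have hred : (∑ x, X i x * M x k) = X i k * M k k := by
        apply Finset.sum_eq_single
        · intro x _ hx
          rcases hx.lt_or_gt with hlt | hgt
          · rw [ih (x : ℕ) (by omega) x rfl (lt_trans hlt hki), zero_mul]
          · rw [hMtri x k hgt, mul_zero]
        · intro hk'; exact absurd (Finset.mem_univ k) hk'
      rw [hred] at hsum
      exact hcancel hsum (hMdiag k)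
  have hWtri : ∀ i k, k < i → W i k = 0 := tri W G H hWG hGtri hGdne hHtri
  have hW'tri : ∀ i k, k < i → W' i k = 0 := tri W' H G hW'H hHtri hHdne hGtri
  -- diagonal entries multiply to 1
  have hdiagprod : ∀ i, W i i * W' i i = 1 := by
    intro i
    have h1 : (W * W') i i = 1 := by rw [hWW']; exact Matrix.one_apply_eq i
    rw [Matrix.mul_apply] at h1
    rw [← h1]
    symm
    apply Finset.sum_eq_single
    · intro x _ hx
      rcases hx.lt_or_gt with hlt | hgt
      · rw [hWtri i x hlt, zero_mul]
      · rw [hW'tri x i hgt, mul_zero]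
    · intro hk'; exact absurd (Finset.mem_univ i) hk'
  -- H i i = W i i * G i i
  have hHii : ∀ i, H i i = W i i * G i i := by
    intro i
    rw [← hWG, Matrix.mul_apply]
    apply Finset.sum_eq_single
    · intro x _ hx
      rcases hx.lt_or_gt with hlt | hgt
      · rw [hWtri i x hlt, zero_mul]
      · rw [hGtri x i hgt, mul_zero]
    · intro hk'; exact absurd (Finset.mem_univ i) hk'
  -- diagonal entries of W are 1
  have hWdiag : ∀ i, W i i = 1 := by
    intro i
    obtain ⟨a, ha0, hai⟩ := R.eq_iota_of_mul_eq_one hδ0 (hdiagprod i)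
    have hcoeffs : ∀ m, R.coeff (H i i) m = a * R.coeff (G i i) m := by
      intro m
      rw [hHii i, hai, R.coeff_iota_mul]
    have hg1 : R.coeff (G i i) (R.natDegD (G i i)) = 1 := hGmon i
    have hdH : R.natDegD (H i i) = R.natDegD (G i i) := by
      apply R.natDegD_eq_of
      · rw [hcoeffs, hg1, mul_one]; exact ha0
      · intro m hm
        rw [hcoeffs, R.coeff_eq_zero_of_natDegD_lt hm, mul_zero]
    have ha1 : a = 1 := by
      have h1 : R.coeff (H i i) (R.natDegD (H i i)) = 1 := hHmon i
      rw [hdH, hcoeffs, hg1, mul_one] at h1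
      exact h1
    rw [hai, ha1, map_one]
  have hHGdiag : ∀ i, H i i = G i i := by
    intro i; rw [hHii i, hWdiag i, one_mul]
  -- off-diagonal entries of W vanish
  have hWoff : ∀ i j, i < j → W i j = 0 := by
    intro i
    suffices h : ∀ m : ℕ, ∀ j : Fin n, (j : ℕ) = m → i < j → W i j = 0 by
      intro j hj; exact h j j rfl hj
    intro m
    induction m using Nat.strong_induction_on with
    | _ m ih =>
      intro j hj hij
      have hsum : H i j = G i j + W i j * G j j := by
        rw [← hWG, Matrix.mul_apply]
        rw [Finset.sum_eq_add_of_mem i j (Finset.mem_univ i) (Finset.mem_univ j)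
          (Fin.ne_of_lt hij) ?_]
        · rw [hWdiag i, one_mul]
        · intro x _ hx
          obtain ⟨hxi, hxj⟩ := hx
          rcases hxi.lt_or_gt with h1 | h1
          · rw [hWtri i x h1, zero_mul]
          · rcases hxj.lt_or_gt with h2 | h2
            · rw [ih (x : ℕ) (by omega) x rfl h1, zero_mul]
            · rw [hGtri x j h2, mul_zero]
      have hkey : W i j * G j j = H i j - G i j := by
        rw [hsum, add_sub_cancel_left]
      by_contra hne
      set d := R.natDegD (G j j) with hd
      set nw := R.natDegD (W i j) with hnw
      have hdegGjj : R.degD (G j j) = ((d : ℕ) : WithBot ℕ) := R.degD_eq_natDegD (hGdne j)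
      have hcH : R.coeff (H i j) (nw + d) = 0 := by
        apply R.coeff_eq_zero_of_degD_lt
        calc R.degD (H i j) < R.degD (H j j) := hHdeg i j hij
          _ = R.degD (G j j) := by rw [hHGdiag j]
          _ = ((d : ℕ) : WithBot ℕ) := hdegGjj
          _ ≤ (((nw + d : ℕ)) : WithBot ℕ) := by exact_mod_cast Nat.le_add_left d nw
      have hcG : R.coeff (G i j) (nw + d) = 0 := by
        apply R.coeff_eq_zero_of_degD_lt
        calc R.degD (G i j) < R.degD (G j j) := hGdeg i j hij
          _ = ((d : ℕ) : WithBot ℕ) := hdegGjj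
          _ ≤ (((nw + d : ℕ)) : WithBot ℕ) := by exact_mod_cast Nat.le_add_left d nw
      have hctop : R.coeff (W i j * G j j) (nw + d) ≠ 0 := by
        rw [(R.coeff_mul_top hδ0 (W i j) (G j j) hne).2]
        exact mul_ne_zero (R.lc_ne_zero hne) (R.lc_ne_zero (hGdne j))
      apply hctop
      rw [hkey, R.coeff_sub', hcH, hcG, sub_zero]
  have hW1 : W = 1 := by
    ext i j
    rcases lt_trichotomy i j with h | h | h
    · rw [hWoff i j h, Matrix.one_apply_ne (Fin.ne_of_lt h)]
    · subst h; rw [hWdiag i, Matrix.one_apply_eq]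
    · rw [hWtri i j h, Matrix.one_apply_ne (Fin.ne_of_gt h)]
  constructor
  · rw [← hWG, hW1, one_mul]
  · have : W * V = U := by
      rw [hW, mul_assoc, hViV, mul_one]
    rw [← this, hW1, one_mul]
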